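/- For simple random sampling without replacement of size n from a population of size N, with e_j = (n)_j/(N)_j the ratio of falling factorials, one has E[S_a S_b] = λ(2) s_{a+b} + λ(1²) s_a s_b, where S_r = ∑_{i=1}^n X_i^r, s_r = ∑_{j=1}^N x_j^r, λ(2) = e_1 − e_2, and λ(1²) = e_2. -/

import Mathlib

open Finset

/-- Expectation under simple random sampling without replacement: the average of `g`
over all ordered samples of `n` distinct indices (i.e. embeddings `Fin n ↪ Fin N`),
each equally likely. -/
noncomputable def srsExp (N n : ℕ) (g : (Fin n ↪ Fin N) → ℝ) : ℝ :=
  (∑ σ : Fin n ↪ Fin N, g σ) / (Fintype.card (Fin n ↪ Fin N))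

section Aux

variable {α β : Type*} [DecidableEq α] [DecidableEq β]

/-- Embeddings with a prescribed value at one point are equivalent to embeddings
of the complements. -/
def srsExtEquiv (i : α) (j : β) :
    {σ : α ↪ β // σ i = j} ≃ ({x : α // x ≠ i} ↪ {y : β // y ≠ j}) where
  toFun σ := ⟨fun x => ⟨σ.1 x.1, fun h => x.2 (σ.1.injective (h.trans σ.2.symm))⟩,
    fun x y h => Subtype.ext (σ.1.injective (by simpa [Subtype.ext_iff] using h))⟩
  invFun τ := ⟨⟨fun z => if h : z = i then j else (τ ⟨z, h⟩).1, by
      intro z w hzw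
      by_cases hz : z = i <;> by_cases hw : w = i <;>
        simp only [hz, hw, dif_pos, dif_neg, not_false_iff] at hzw ⊢
      · exact absurd hzw.symm (τ ⟨w, hw⟩).2
      · exact absurd hzw (τ ⟨z, hz⟩).2
      · exact Subtype.ext_iff.mp (τ.injective (Subtype.ext hzw))⟩, by simp⟩
  left_inv σ := by
    apply Subtype.ext
    apply Function.Embedding.ext
    intro z
    by_cases h : z = i <;> simp [h, σ.2] <;> rfl
  right_inv τ := by
    apply Function.Embedding.ext
    intro z
    apply Subtype.ext
    simp [z.2]

lemma srs_card_one [Fintype α] [Fintype β] (i : α) (j : β) :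
    Fintype.card {σ : α ↪ β // σ i = j}
      = (Fintype.card β - 1).descFactorial (Fintype.card α - 1) := by
  rw [Fintype.card_congr (srsExtEquiv i j), Fintype.card_embedding_eq]
  congr 1 <;> simp

lemma srs_card_two [Fintype α] [Fintype β] {i k : α} (hik : k ≠ i) {j l : β} (hjl : l ≠ j) :
    Fintype.card {σ : α ↪ β // σ i = j ∧ σ k = l}
      = (Fintype.card β - 2).descFactorial (Fintype.card α - 2) := by
  have e1 : {σ : α ↪ β // σ i = j ∧ σ k = l}
      ≃ {τ : {x : α // x ≠ i} ↪ {y : β // y ≠ j} // τ ⟨k, hik⟩ = ⟨l, hjl⟩} :=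
    (Equiv.subtypeSubtypeEquivSubtypeInter (fun σ : α ↪ β => σ i = j)
        (fun σ => σ k = l)).symm.trans
      ((srsExtEquiv i j).subtypeEquiv (fun σ => by
        constructor
        · intro h; exact Subtype.ext h
        · intro h; exact congrArg Subtype.val h))
  rw [Fintype.card_congr e1, srs_card_one]
  congr 1 <;> simp [Nat.sub_sub]

lemma srs_card_diag [Fintype α] [Fintype β] {i k : α} (hik : k ≠ i) (j : β) :
    Fintype.card {σ : α ↪ β // σ i = j ∧ σ k = j} = 0 := by
  rw [Fintype.card_eq_zero_iff]
  constructor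
  intro ⟨σ, h1, h2⟩
  exact hik (σ.injective (h2.trans h1.symm))

end Aux

/-- `E[S_a S_b] = λ(2) s_{a+b} + λ(1²) s_a s_b` with `λ(2) = e₁ - e₂`, `λ(1²) = e₂`,
where `e_j = (n)_j/(N)_j`. -/
theorem srs_expect_SaSb (N n a b : ℕ) (hn : 2 ≤ n) (hnN : n ≤ N)
    (x : Fin N → ℝ) :
    srsExp N n (fun σ => (∑ i, x (σ i) ^ a) * (∑ i, x (σ i) ^ b))
      = ((n.descFactorial 1 : ℝ) / (N.descFactorial 1)
            - (n.descFactorial 2 : ℝ) / (N.descFactorial 2)) * (∑ j, x j ^ (a + b))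
        + ((n.descFactorial 2 : ℝ) / (N.descFactorial 2))
            * ((∑ j, x j ^ a) * (∑ j, x j ^ b)) := by
  have hN : 2 ≤ N := hn.trans hnN
  set D1 : ℕ := (N - 1).descFactorial (n - 1) with hD1def
  set D2 : ℕ := (N - 2).descFactorial (n - 2) with hD2def
  set sa : ℝ := ∑ j, x j ^ a with hsa
  set sb : ℝ := ∑ j, x j ^ b with hsb
  set sab : ℝ := ∑ j, x j ^ (a + b) with hsab
  -- diagonal term
  have hdiag : ∀ i : Fin n, (∑ σ : Fin n ↪ Fin N, x (σ i) ^ a * x (σ i) ^ b)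
      = (D1 : ℝ) * sab := by
    intro i
    have := Fintype.sum_fiberwise (fun σ : Fin n ↪ Fin N => σ i)
      (fun σ => x (σ i) ^ a * x (σ i) ^ b)
    rw [← this]
    have : ∀ j : Fin N, (∑ σ : {σ : Fin n ↪ Fin N // σ i = j},
        x (σ.1 i) ^ a * x (σ.1 i) ^ b) = (D1 : ℝ) * (x j ^ (a + b)) := by
      intro j
      have h1 : ∀ σ : {σ : Fin n ↪ Fin N // σ i = j},
          x (σ.1 i) ^ a * x (σ.1 i) ^ b = x j ^ (a + b) := by
        intro σ; rw [σ.2, pow_add]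
      rw [Finset.sum_congr rfl (fun σ _ => h1 σ), Finset.sum_const, Finset.card_univ,
        srs_card_one, nsmul_eq_mul]
      simp [hD1def]
    rw [Finset.sum_congr rfl (fun j _ => this j), ← Finset.mul_sum, hsab]
  -- off-diagonal term
  have hoff : ∀ i k : Fin n, k ≠ i →
      (∑ σ : Fin n ↪ Fin N, x (σ i) ^ a * x (σ k) ^ b)
        = (D2 : ℝ) * (sa * sb - sab) := by
    intro i k hik
    have hfib := Fintype.sum_fiberwise (fun σ : Fin n ↪ Fin N => (σ i, σ k))
      (fun σ => x (σ i) ^ a * x (σ k) ^ b)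
    rw [← hfib]
    have hcard : ∀ p : Fin N × Fin N,
        Fintype.card {σ : Fin n ↪ Fin N // (σ i, σ k) = p}
          = if p.2 = p.1 then 0 else D2 := by
      intro ⟨j, l⟩
      have : {σ : Fin n ↪ Fin N // (σ i, σ k) = (j, l)}
          ≃ {σ : Fin n ↪ Fin N // σ i = j ∧ σ k = l} :=
        Equiv.subtypeEquivRight (fun σ => by simp [Prod.ext_iff])
      rw [Fintype.card_congr this]
      by_cases hjl : l = j
      · subst hjl
        simp [srs_card_diag hik]
      · rw [srs_card_two hik hjl]
        simp [hD2def, if_neg hjl]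
    have hstep : ∀ p : Fin N × Fin N,
        (∑ σ : {σ : Fin n ↪ Fin N // (σ i, σ k) = p}, x (σ.1 i) ^ a * x (σ.1 k) ^ b)
          = (if p.2 = p.1 then (0 : ℝ) else (D2 : ℝ)) * (x p.1 ^ a * x p.2 ^ b) := by
      intro p
      have h1 : ∀ σ : {σ : Fin n ↪ Fin N // (σ i, σ k) = p},
          x (σ.1 i) ^ a * x (σ.1 k) ^ b = x p.1 ^ a * x p.2 ^ b := by
        intro σ
        have h2 : σ.1 i = p.1 := congrArg Prod.fst σ.2
        have h3 : σ.1 k = p.2 := congrArg Prod.snd σ.2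
        rw [h2, h3]
      rw [Finset.sum_congr rfl (fun σ _ => h1 σ), Finset.sum_const, Finset.card_univ,
        hcard p, nsmul_eq_mul]
      split_ifs with h <;> simp
    rw [Finset.sum_congr rfl (fun p _ => hstep p)]
    rw [Fintype.sum_prod_type]
    have : ∀ j : Fin N, (∑ l : Fin N,
        (if l = j then (0 : ℝ) else (D2 : ℝ)) * (x j ^ a * x l ^ b))
          = (D2 : ℝ) * (x j ^ a * ∑ l, x l ^ b) - (D2 : ℝ) * (x j ^ (a + b)) := by
      intro j
      have : ∀ l : Fin N, (if l = j then (0 : ℝ) else (D2 : ℝ)) * (x j ^ a * x l ^ b)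
          = (D2 : ℝ) * (x j ^ a * x l ^ b)
            - (if l = j then (D2 : ℝ) * (x j ^ a * x l ^ b) else 0) := by
        intro l; split_ifs <;> ring
      rw [Finset.sum_congr rfl (fun l _ => this l), Finset.sum_sub_distrib,
        Finset.sum_ite_eq' Finset.univ j (fun l => (D2 : ℝ) * (x j ^ a * x l ^ b))]
      simp [Finset.mul_sum, pow_add]
    rw [Finset.sum_congr rfl (fun j _ => this j), Finset.sum_sub_distrib,
      ← Finset.mul_sum, ← Finset.mul_sum, ← Finset.sum_mul, ← hsa, ← hsb, ← hsab]
    ring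
  -- assemble
  unfold srsExp
  rw [show (fun σ : Fin n ↪ Fin N => (∑ i, x (σ i) ^ a) * (∑ i, x (σ i) ^ b))
      = fun σ => ∑ i, ∑ k, x (σ i) ^ a * x (σ k) ^ b from
    funext fun σ => by rw [Finset.sum_mul_sum]]
  rw [Finset.sum_comm]
  rw [Finset.sum_congr rfl (fun _ _ => Finset.sum_comm)]
  have key : ∀ i : Fin n, (∑ k : Fin n, ∑ σ : Fin n ↪ Fin N, x (σ i) ^ a * x (σ k) ^ b)
      = (D1 : ℝ) * sab + ((n : ℝ) - 1) * ((D2 : ℝ) * (sa * sb - sab)) := by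
    intro i
    have hterm : ∀ k : Fin n, (∑ σ : Fin n ↪ Fin N, x (σ i) ^ a * x (σ k) ^ b)
        = ((D2 : ℝ) * (sa * sb - sab))
          + (if k = i then ((D1 : ℝ) * sab - (D2 : ℝ) * (sa * sb - sab)) else 0) := by
      intro k
      by_cases hk : k = i
      · subst hk; rw [hdiag k]; simp
      · rw [hoff i k hk]; simp [hk]
    rw [Finset.sum_congr rfl (fun k _ => hterm k), Finset.sum_add_distrib,
      Finset.sum_const, Finset.card_univ, Fintype.card_fin,
      Finset.sum_ite_eq' Finset.univ i
        (fun _ => ((D1 : ℝ) * sab - (D2 : ℝ) * (sa * sb - sab)))]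
    have hn1 : (1 : ℝ) ≤ (n : ℝ) := by exact_mod_cast Nat.one_le_of_lt hn
    simp only [Finset.mem_univ, if_true, nsmul_eq_mul]
    ring
  rw [Finset.sum_congr rfl (fun i _ => key i), Finset.sum_const, Finset.card_univ,
    Fintype.card_fin, nsmul_eq_mul, Fintype.card_embedding_eq, Fintype.card_fin,
    Fintype.card_fin]
  -- numeric identities
  have hD2pos : 0 < D2 := by
    rw [hD2def, Nat.pos_iff_ne_zero, Ne, Nat.descFactorial_eq_zero_iff_lt]
    omega
  have hD1eq : D1 = D2 * (N - 1) := by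
    have := Nat.descFactorial_mul_descFactorial (k := 1) (m := n - 1) (n := N - 1)
      (by omega)
    rw [Nat.descFactorial_one] at this
    rw [hD1def, ← this, hD2def]
    congr 2 <;> omega
  have hCeq : N.descFactorial n = D1 * N := by
    have := Nat.descFactorial_mul_descFactorial (k := 1) (m := n) (n := N) (by omega)
    rw [Nat.descFactorial_one] at this
    rw [← this, hD1def]
  have hNd2 : N.descFactorial 2 = (N - 1) * N := by
    rw [Nat.descFactorial_succ, Nat.descFactorial_one]
  have hnd2 : n.descFactorial 2 = (n - 1) * n := by
    rw [Nat.descFactorial_succ, Nat.descFactorial_one]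
  have hNR : ((N - 1 : ℕ) : ℝ) = (N : ℝ) - 1 := by
    rw [Nat.cast_sub (by omega)]; norm_num
  have hnR : ((n - 1 : ℕ) : ℝ) = (n : ℝ) - 1 := by
    rw [Nat.cast_sub (by omega)]; norm_num
  have hD1R : (D1 : ℝ) = (D2 : ℝ) * ((N : ℝ) - 1) := by
    rw [hD1eq]; push_cast [hNR]; ring
  have hCR : ((N.descFactorial n : ℕ) : ℝ) = (D2 : ℝ) * ((N : ℝ) - 1) * (N : ℝ) := by
    rw [hCeq]; push_cast [hD1R]; ring
  have hNd2R : ((N.descFactorial 2 : ℕ) : ℝ) = ((N : ℝ) - 1) * (N : ℝ) := by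
    rw [hNd2]; push_cast [hNR]; ring
  have hnd2R : ((n.descFactorial 2 : ℕ) : ℝ) = ((n : ℝ) - 1) * (n : ℝ) := by
    rw [hnd2]; push_cast [hnR]; ring
  have hNne : (N : ℝ) ≠ 0 := by
    have : 0 < N := by omega
    exact_mod_cast this.ne'
  have hN1ne : (N : ℝ) - 1 ≠ 0 := by
    have : (1 : ℝ) < (N : ℝ) := by exact_mod_cast hN
    linarith
  have hD2ne : (D2 : ℝ) ≠ 0 := by exact_mod_cast hD2pos.ne'
  rw [Nat.descFactorial_one, Nat.descFactorial_one, hnd2R, hNd2R, hCR, hD1R]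
  field_simp
  ring
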